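/- Let h > 0 be a real number, let H̃ ∈ ℂ^{N × N} be Hermitian, and let σ_n ∈ ℂ^{N × N} be Hermitian. Suppose σ_{n+1} ∈ ℂ^{N × N} satisfies σ_{n+1} − σ_n = −(i h / 2) [H̃, σ_n + σ_{n+1}], and suppose the linear map X ↦ X + (i h / 2) [H̃, X] on ℂ^{N × N} is injective. Then σ_{n+1} is Hermitian, i.e. σ_{n+1}† = σ_{n+1}. -/

import Mathlib

open Matrix

/-- **Hermiticity preservation of the implicit midpoint update of the occupation matrix.**
If `H̃` and `σₙ` are Hermitian, `σ_{n+1} − σₙ = −(i h / 2) [H̃, σₙ + σ_{n+1}]`, and the linear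
map `X ↦ X + (i h / 2) [H̃, X]` is injective, then `σ_{n+1}` is Hermitian. -/
theorem ptim_sigma_hermitian
    (N : ℕ) (h : ℝ) (hh : 0 < h)
    (Htil σn σn1 : Matrix (Fin N) (Fin N) ℂ)
    (hH : Htil.IsHermitian) (hσn : σn.IsHermitian)
    (hupdate : σn1 - σn = (-(Complex.I * (h : ℂ) / 2)) • ⁅Htil, σn + σn1⁆)
    (hinj : Function.Injective
      (fun X : Matrix (Fin N) (Fin N) ℂ => X + (Complex.I * (h : ℂ) / 2) • ⁅Htil, X⁆)) :
    σn1.IsHermitian := by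
  set c : ℂ := Complex.I * (h : ℂ) / 2 with hc
  have hcs : star c = -c := by
    simp [hc, Complex.star_def, map_div₀, Complex.conj_I]
    ring
  have key : σn1 + c • ⁅Htil, σn1⁆ = σn - c • ⁅Htil, σn⁆ := by
    have h2 := hupdate
    letI := LieRing.ofAssociativeRing (A := Matrix (Fin N) (Fin N) ℂ)
    rw [lie_add, smul_add, sub_eq_iff_eq_add] at h2
    set L0 := ⁅Htil, σn⁆
    set L1 := ⁅Htil, σn1⁆
    rw [h2]
    module
  have hR : (σn - c • ⁅Htil, σn⁆)ᴴ = σn - c • ⁅Htil, σn⁆ := by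
    simp only [Ring.lie_def, conjTranspose_sub, conjTranspose_smul, conjTranspose_mul,
      hH.eq, hσn.eq, hcs]
    module
  have hconj : σn1ᴴ + c • ⁅Htil, σn1ᴴ⁆ = (σn1 + c • ⁅Htil, σn1⁆)ᴴ := by
    simp only [Ring.lie_def, conjTranspose_add, conjTranspose_sub, conjTranspose_smul,
      conjTranspose_mul, hH.eq, hcs]
    module
  have : σn1ᴴ + c • ⁅Htil, σn1ᴴ⁆ = σn1 + c • ⁅Htil, σn1⁆ := by
    rw [hconj, key, hR, ← key]
  exact hinj this
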